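/- For every n ≥ 3 and every r ∈ ℕ with r ≤ n/2, one has |S_n(r)| ≥ |B_n(r)|/√n, i.e., C(n,r) ≥ (Σ_{k=0}^{r} C(n,k)) / √n. -/

import Mathlib

open Finset

/-- Comparison of ratios: for `k ≤ r`, `2r ≤ n`,
`C(n,k)/C(n,r) ≤ C(2r,k)/C(2r,r)` in cross-multiplied form. -/
lemma aux_ratio (n r : ℕ) (h2 : 2 * r ≤ n) :
    ∀ d k, k + d = r → n.choose k * (2 * r).choose r ≤ n.choose r * (2 * r).choose k := by
  intro d
  induction d with
  | zero => intro k hk; simp at hk; subst hk; ring_nf; exact le_rfl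
  | succ d ih =>
      intro k hk
      have hk1 : (k + 1) + d = r := by omega
      have IH := ih (k + 1) hk1
      have hkr : k < r := by omega
      have hpos1 : 0 < n - k := by omega
      have hpos2 : 0 < 2 * r - k := by omega
      have e1 : n.choose (k + 1) * (k + 1) = n.choose k * (n - k) :=
        Nat.choose_succ_right_eq n k
      have e2 : (2 * r).choose (k + 1) * (k + 1) = (2 * r).choose k * (2 * r - k) :=
        Nat.choose_succ_right_eq (2 * r) k
      have key : n.choose k * (2 * r).choose r * ((n - k) * (2 * r - k)) ≤
          n.choose r * (2 * r).choose k * ((n - k) * (2 * r - k)) := by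
        calc n.choose k * (2 * r).choose r * ((n - k) * (2 * r - k))
            = (n.choose k * (n - k)) * ((2 * r).choose r * (2 * r - k)) := by ring
          _ = (n.choose (k + 1) * (k + 1)) * ((2 * r).choose r * (2 * r - k)) := by rw [e1]
          _ = (n.choose (k + 1) * (2 * r).choose r) * ((k + 1) * (2 * r - k)) := by ring
          _ ≤ (n.choose r * (2 * r).choose (k + 1)) * ((k + 1) * (2 * r - k)) :=
              Nat.mul_le_mul_right _ IH
          _ = n.choose r * ((2 * r).choose (k + 1) * (k + 1)) * (2 * r - k) := by ring
          _ = n.choose r * ((2 * r).choose k * (2 * r - k)) * (2 * r - k) := by rw [e2]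
          _ = n.choose r * (2 * r).choose k * ((2 * r - k) * (2 * r - k)) := by ring
          _ ≤ n.choose r * (2 * r).choose k * ((n - k) * (2 * r - k)) := by
              apply Nat.mul_le_mul_left
              apply Nat.mul_le_mul_right
              omega
      exact Nat.le_of_mul_le_mul_right key (Nat.mul_pos hpos1 hpos2)

/-- `2 * ∑_{k=0}^{r} C(2r,k) = 4^r + C(2r,r)`. -/
lemma aux_halfsum (r : ℕ) :
    2 * ∑ k ∈ Finset.range (r + 1), (2 * r).choose k = 4 ^ r + (2 * r).choose r := by
  have hfull : ∑ k ∈ Finset.range (2 * r + 1), (2 * r).choose k = 4 ^ r := by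
    rw [Nat.sum_range_choose]
    rw [show (4:ℕ)^r = (2^2)^r by norm_num, ← pow_mul]
  have hsplit : ∑ k ∈ Finset.range (2 * r + 1), (2 * r).choose k
      = (∑ k ∈ Finset.range (r + 1), (2 * r).choose k)
        + ∑ k ∈ Finset.Ico (r + 1) (2 * r + 1), (2 * r).choose k := by
    rw [Finset.range_eq_Ico, ← Finset.sum_Ico_consecutive _ (by omega : 0 ≤ r + 1) (by omega), ← Finset.range_eq_Ico]
  have hico : ∑ k ∈ Finset.Ico (r + 1) (2 * r + 1), (2 * r).choose k
      = ∑ k ∈ Finset.range r, (2 * r).choose k := by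
    rw [Finset.sum_Ico_eq_sum_range]
    have h0 : 2 * r + 1 - (r + 1) = r := by omega
    rw [h0]
    rw [← Finset.sum_range_reflect (fun k => (2 * r).choose (r + 1 + k)) r]
    apply Finset.sum_congr rfl
    intro j hj
    simp only [Finset.mem_range] at hj
    have h1 : r + 1 + (r - 1 - j) = 2 * r - j := by omega
    rw [h1, Nat.choose_symm (by omega)]
  have hrange : ∑ k ∈ Finset.range (r + 1), (2 * r).choose k
      = (∑ k ∈ Finset.range r, (2 * r).choose k) + (2 * r).choose r :=
    Finset.sum_range_succ _ r
  omega

/-- `16^r ≤ 4r · C(2r,r)²` for `r ≥ 1`. -/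
lemma aux_cb : ∀ r : ℕ, 1 ≤ r → 16 ^ r ≤ 4 * r * ((2 * r).choose r) ^ 2 := by
  intro r hr
  induction r with
  | zero => omega
  | succ m ih =>
      rcases Nat.eq_or_lt_of_le hr with h1 | h1
      · simp [← h1]
      · have hm : 1 ≤ m := by omega
        have IH := ih hm
        have hstep : (m + 1) * (m + 1).centralBinom = 2 * (2 * m + 1) * m.centralBinom :=
          Nat.succ_mul_centralBinom_succ m
        have hc1 : (2 * (m + 1)).choose (m + 1) = (m + 1).centralBinom := rfl
        have hc2 : (2 * m).choose m = m.centralBinom := rfl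
        rw [hc1]
        rw [hc2] at IH
        have key : 16 ^ (m + 1) * (m + 1) ^ 2
            ≤ (4 * (m + 1) * ((m + 1).centralBinom) ^ 2) * (m + 1) ^ 2 := by
          have e : (4 * (m + 1) * ((m + 1).centralBinom) ^ 2) * (m + 1) ^ 2
              = 4 * (m + 1) * ((m + 1) * (m + 1).centralBinom) ^ 2 := by ring
          rw [e, hstep]
          calc 16 ^ (m + 1) * (m + 1) ^ 2 = 16 * (m + 1) ^ 2 * 16 ^ m := by ring
            _ ≤ 16 * (m + 1) ^ 2 * (4 * m * (m.centralBinom) ^ 2) :=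
                Nat.mul_le_mul_left _ IH
            _ ≤ 4 * (m + 1) * (2 * (2 * m + 1) * m.centralBinom) ^ 2 := by nlinarith
        exact Nat.le_of_mul_le_mul_right key (by positivity)

/-- For `n ≥ 3` and `r ≤ n/2`, one has `|S_n(r)| ≥ |B_n(r)|/√n`, i.e.
`C(n,r) ≥ (Σ_{k=0}^r C(n,k))/√n`. -/
theorem sphere_ge_ball_div_sqrt (n r : ℕ) (hn : 3 ≤ n) (hr : 2 * r ≤ n) :
    (n.choose r : ℝ) ≥ (∑ k ∈ Finset.range (r + 1), (n.choose k : ℝ)) / Real.sqrt n := by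
  have hn0 : (0:ℝ) < n := by exact_mod_cast (by omega : 0 < n)
  have hs : (0:ℝ) < Real.sqrt n := Real.sqrt_pos.2 hn0
  rw [ge_iff_le, div_le_iff₀ hs]
  rcases Nat.eq_zero_or_pos r with hr0 | hr1
  · subst hr0
    simp only [zero_add, Finset.range_one, Finset.sum_singleton, Nat.choose_zero_right, Nat.cast_one]
    have h1 : (1:ℝ) ≤ Real.sqrt n := by
      rw [show (1:ℝ) = Real.sqrt 1 by simp]
      exact Real.sqrt_le_sqrt (by exact_mod_cast (by omega : (1:ℕ) ≤ n))
    linarith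
  -- main case r ≥ 1
  have hBM : (∑ k ∈ Finset.range (r + 1), n.choose k) * (2 * r).choose r
      ≤ n.choose r * ∑ k ∈ Finset.range (r + 1), (2 * r).choose k := by
    rw [Finset.sum_mul, Finset.mul_sum]
    apply Finset.sum_le_sum
    intro k hk
    simp only [Finset.mem_range] at hk
    exact aux_ratio n r hr (r - k) k (by omega)
  have hhalf := aux_halfsum r
  have hcb := aux_cb r hr1
  set B : ℝ := ∑ k ∈ Finset.range (r + 1), (n.choose k : ℝ) with hB
  set C : ℝ := (n.choose r : ℝ) with hC
  set M : ℝ := ((2 * r).choose r : ℝ) with hM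
  set S : ℝ := ∑ k ∈ Finset.range (r + 1), ((2 * r).choose k : ℝ) with hS
  have hBM' : B * M ≤ C * S := by
    rw [hB, hC, hM, hS, ← Nat.cast_sum, ← Nat.cast_sum]
    exact_mod_cast hBM
  have hhalf' : 2 * S = 4 ^ r + M := by
    rw [hS, hM, ← Nat.cast_sum]
    exact_mod_cast hhalf
  have hMpos : (0:ℝ) < M := by
    rw [hM]
    exact_mod_cast Nat.choose_pos (by omega)
  have hCpos : (1:ℝ) ≤ C := by
    rw [hC]
    exact_mod_cast Nat.choose_pos (by omega : r ≤ n)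
  -- 4^r ≤ 2 √r M
  have h4r : (4:ℝ) ^ r ≤ 2 * Real.sqrt r * M := by
    have hcb' : ((4:ℝ) ^ r) ^ 2 ≤ (2 * Real.sqrt r * M) ^ 2 := by
      have e : ((4:ℝ) ^ r) ^ 2 = 16 ^ r := by
        rw [← pow_mul, show (16:ℝ) = 4^2 by norm_num, ← pow_mul, Nat.mul_comm]
      have hsq : Real.sqrt r ^ 2 = r := Real.sq_sqrt (by positivity)
      have e2 : (2 * Real.sqrt r * M) ^ 2 = 4 * r * M ^ 2 := by
        rw [mul_pow, mul_pow, hsq]; ring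
      rw [e, e2, hM]
      calc (16:ℝ) ^ r ≤ ((4 * r * ((2 * r).choose r) ^ 2 : ℕ) : ℝ) := by exact_mod_cast hcb
        _ = 4 * r * (((2 * r).choose r : ℕ) : ℝ) ^ 2 := by push_cast; ring
    nlinarith [pow_pos (show (0:ℝ) < 4 by norm_num) r, mul_nonneg (mul_nonneg (by norm_num : (0:ℝ) ≤ 2) (Real.sqrt_nonneg (r:ℝ))) hMpos.le]
  -- combine: 2 B ≤ C (2√r + 1)
  have hmain : 2 * B ≤ C * (2 * Real.sqrt r + 1) := by
    have h4 : 2 * B * M ≤ C * (2 * Real.sqrt r + 1) * M := by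
      calc 2 * B * M = 2 * (B * M) := by ring
        _ ≤ 2 * (C * S) := by linarith
        _ = C * (4 ^ r + M) := by rw [← hhalf']; ring
        _ ≤ C * (2 * Real.sqrt r * M + M) := by
            apply mul_le_mul_of_nonneg_left _ (by linarith)
            linarith
        _ = C * (2 * Real.sqrt r + 1) * M := by ring
    exact le_of_mul_le_mul_right h4 hMpos
  -- numeric finish
  have hsr : Real.sqrt 2 * Real.sqrt r ≤ Real.sqrt n := by
    rw [← Real.sqrt_mul (by norm_num : (0:ℝ) ≤ 2)]
    apply Real.sqrt_le_sqrt
    exact_mod_cast hr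
  have ha1 : (1.414:ℝ) ≤ Real.sqrt 2 := by
    rw [show (1.414:ℝ) = Real.sqrt (1.414^2) from (Real.sqrt_sq (by norm_num)).symm]
    exact Real.sqrt_le_sqrt (by norm_num)
  have ha2 : Real.sqrt 2 ≤ 1.415 := by
    rw [show (1.415:ℝ) = Real.sqrt (1.415^2) from (Real.sqrt_sq (by norm_num)).symm]
    exact Real.sqrt_le_sqrt (by norm_num)
  have hb1 : (1.732:ℝ) ≤ Real.sqrt n := by
    rw [show (1.732:ℝ) = Real.sqrt (1.732^2) from (Real.sqrt_sq (by norm_num)).symm]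
    apply Real.sqrt_le_sqrt
    have : (3:ℝ) ≤ n := by exact_mod_cast hn
    nlinarith
  have hrnn : (0:ℝ) ≤ Real.sqrt r := Real.sqrt_nonneg _
  have h5 : 2 * Real.sqrt r ≤ 1.415 * Real.sqrt n := by
    nlinarith [mul_le_mul_of_nonneg_right ha1 hrnn]
  nlinarith [hmain, h5, hCpos, hb1, hs.le]
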